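/- arXiv:1610.03433 — 2 statements merged into one kernel-verified Lean document; each statement's English description precedes it below -/
import Mathlib

section
/- Let ρ > 0 be a real number, q = ⌊ρ⌋, and let μ be a positive Borel measure on ℂ whose support does not contain 0 and whose counting function μ^rad has finite type at order ρ, i.e. limsup_{t→∞} μ^rad(t)/t^ρ < ∞. Then for every z ∈ ℂ with |z| = r one has U_q^μ(z) ≤ ∫_0^∞ 𝓜_q(r/t) dμ^rad(t), where the integral is the Lebesgue–Stieltjes integral with respect to the increasing function μ^rad. -/
open MeasureTheory Filter

/-- The Weierstrass primary kernel of genus `q`: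
`K_q(z) = ln |1 - z| + ∑_{k=1}^q Re (z^k / k)`. -/
noncomputable def weierstrassKernel (q : ℕ) (z : ℂ) : ℝ :=
  Real.log ‖1 - z‖ + ∑ k ∈ Finset.Icc 1 q, (z ^ k / (k : ℂ)).re

/-- `𝓜_q(r) = max_{|z| = r} K_q(z)`. -/
noncomputable def maxKernel (q : ℕ) (r : ℝ) : ℝ :=
  sSup (weierstrassKernel q '' Metric.sphere (0 : ℂ) r)

/-- The right derivative `𝓜_q'` of `𝓜_q`. -/
noncomputable def maxKernelDeriv (q : ℕ) (t : ℝ) : ℝ :=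
  derivWithin (maxKernel q) (Set.Ici t) t

/-- The counting function `μ^rad(t) = μ {z : |z| ≤ t}` of a measure on `ℂ`. -/
noncomputable def countingFun (μ : Measure ℂ) (t : ℝ) : ℝ :=
  (μ (Metric.closedBall 0 t)).toReal

/-- The averaged counting function `N_μ(t) = ∫_0^t μ^rad(s)/s ds`. -/
noncomputable def avgCountingFun (μ : Measure ℂ) (t : ℝ) : ℝ :=
  ∫ s in (0:ℝ)..t, countingFun μ s / s

/-- `μ^rad` has finite type at order `ρ`: `limsup_{t→∞} μ^rad(t)/t^ρ < ∞`
(stated in `ℝ≥0∞`, which in particular forces `μ` to be finite on closed balls). -/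
def HasFiniteType (μ : Measure ℂ) (ρ : ℝ) : Prop :=
  Filter.limsup (fun t : ℝ => μ (Metric.closedBall 0 t) / ENNReal.ofReal (t ^ ρ))
    Filter.atTop < ⊤

/-- The support of `μ` does not contain `0`, i.e. `μ` vanishes near `0`. -/
def SuppAvoidsZero (μ : Measure ℂ) : Prop :=
  ∃ ε > 0, μ (Metric.ball (0 : ℂ) ε) = 0

/-- The canonical Hadamard–Weierstrass integral `U_q^μ(z) = ∫_ℂ K_q(z/w) dμ(w)`. -/
noncomputable def hwIntegral (q : ℕ) (μ : Measure ℂ) (z : ℂ) : ℝ :=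
  ∫ w, weierstrassKernel q (z / w) ∂μ

/-- The maximum of `U_q^μ` on the circle `|z| = r`. -/
noncomputable def hwMax (q : ℕ) (μ : Measure ℂ) (r : ℝ) : ℝ :=
  sSup (hwIntegral q μ '' Metric.sphere (0 : ℂ) r)



namespace ValironAux
open scoped ENNReal NNReal


noncomputable def bnd (q : ℕ) (s : ℝ) : ℝ :=
  Real.log (1 + s) + ∑ k ∈ Finset.Icc 1 q, s ^ k / k

lemma wk_le_bnd (q : ℕ) {z : ℂ} {s : ℝ} (hz : ‖z‖ = s) :
    weierstrassKernel q z ≤ bnd q s := by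
  have hs : 0 ≤ s := hz ▸ norm_nonneg z
  unfold weierstrassKernel bnd
  have h1 : Real.log (‖1 - z‖) ≤ Real.log (1 + s) := by
    have habs : ‖1 - z‖ ≤ 1 + s := by
      calc ‖1 - z‖ ≤ ‖(1:ℂ)‖ + ‖z‖ := norm_sub_le 1 z
        _ = 1 + s := by rw [norm_one, hz]
    rcases eq_or_lt_of_le (norm_nonneg (1 - z)) with h0 | h0
    · rw [← h0, Real.log_zero]
      exact Real.log_nonneg (by linarith)
    · exact Real.log_le_log h0 habs
  have h2 : ∀ k ∈ Finset.Icc 1 q, (z ^ k / (k : ℂ)).re ≤ s ^ k / k := by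
    intro k hk
    calc (z ^ k / (k : ℂ)).re ≤ ‖z ^ k / (k : ℂ)‖ := Complex.re_le_norm _
      _ = s ^ k / k := by rw [norm_div, norm_pow, hz, Complex.norm_natCast]
  exact add_le_add h1 (Finset.sum_le_sum h2)

lemma mem_sphere_iff {z : ℂ} {s : ℝ} : z ∈ Metric.sphere (0 : ℂ) s ↔ ‖z‖ = s := by
  rw [mem_sphere_zero_iff_norm]

lemma bddAbove_wk (q : ℕ) (s : ℝ) :
    BddAbove (weierstrassKernel q '' Metric.sphere (0 : ℂ) s) := by
  refine ⟨bnd q s, ?_⟩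
  rintro x ⟨w, hw, rfl⟩
  exact wk_le_bnd q (mem_sphere_iff.mp hw)

lemma wk_le_maxKernel (q : ℕ) {z : ℂ} {s : ℝ} (hz : ‖z‖ = s) :
    weierstrassKernel q z ≤ maxKernel q s :=
  le_csSup (bddAbove_wk q s) ⟨z, mem_sphere_iff.mpr hz, rfl⟩

lemma maxKernel_le (q : ℕ) {s B : ℝ} (hs : 0 ≤ s)
    (hB : ∀ w : ℂ, ‖w‖ = s → weierstrassKernel q w ≤ B) :
    maxKernel q s ≤ B := by
  apply csSup_le
  · exact ⟨weierstrassKernel q (s : ℂ), ⟨(s : ℂ), mem_sphere_iff.mpr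
      (by rw [Complex.norm_real, Real.norm_eq_abs, abs_of_nonneg hs]), rfl⟩⟩
  · rintro x ⟨w, hw, rfl⟩
    exact hB w (mem_sphere_iff.mp hw)

lemma maxKernel_le_bnd (q : ℕ) {s : ℝ} (hs : 0 ≤ s) : maxKernel q s ≤ bnd q s :=
  maxKernel_le q hs fun _ hw => wk_le_bnd q hw

lemma bnd_mono (q : ℕ) {s s' : ℝ} (hs : 0 ≤ s) (hss' : s ≤ s') : bnd q s ≤ bnd q s' := by
  unfold bnd
  have h1 : Real.log (1 + s) ≤ Real.log (1 + s') := Real.log_le_log (by linarith) (by linarith)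
  refine add_le_add h1 (Finset.sum_le_sum fun k _ => ?_)
  gcongr


lemma maxKernel_nonneg (q : ℕ) {s : ℝ} (hs : 0 ≤ s) : 0 ≤ maxKernel q s := by
  set n := q + 1 with hn_def
  have hn : 0 < n := Nat.succ_pos q
  set ζ : ℂ := Complex.exp (2 * Real.pi * Complex.I / n) with hζ_def
  have hζ : IsPrimitiveRoot ζ n := Complex.isPrimitiveRoot_exp n hn.ne'
  set α : ℂ := (s : ℂ) * Complex.exp (Real.pi / n * Complex.I) with hα_def
  have hαn : α ^ n = -((s : ℂ) ^ n) := by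
    rw [hα_def, mul_pow, ← Complex.exp_nat_mul]
    have : (n : ℂ) * (Real.pi / n * Complex.I) = Real.pi * Complex.I := by
      have : (n : ℂ) ≠ 0 := Nat.cast_ne_zero.mpr hn.ne'
      field_simp
    rw [this, Complex.exp_pi_mul_I, mul_neg_one]
  set f : ℕ → ℂ := fun j => ζ ^ j * α with hf_def
  have hfn : ∀ j, f j ^ n = -((s : ℂ) ^ n) := by
    intro j
    rw [hf_def, mul_pow, ← pow_mul, mul_comm j n, pow_mul, hζ.pow_eq_one, one_pow, one_mul, hαn]
  have habs : ∀ j, ‖f j‖ = s := by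
    intro j
    have e1 : ζ = Complex.exp (((2 * Real.pi / n : ℝ) : ℂ) * Complex.I) := by
      rw [hζ_def]; congr 1; push_cast; ring
    have e2 : α = (s : ℂ) * Complex.exp (((Real.pi / n : ℝ) : ℂ) * Complex.I) := by
      rw [hα_def]; congr 2; push_cast; ring
    rw [hf_def]
    simp only [e1, e2, norm_mul, norm_pow, Complex.norm_exp_ofReal_mul_I, Complex.norm_real, Real.norm_eq_abs,
      one_pow, one_mul, mul_one, abs_of_nonneg hs]
  have hne1 : ∀ j, (1 : ℂ) - f j ≠ 0 := by
    intro j h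
    have hfj : f j = 1 := by linear_combination -h
    have : (1 : ℂ) = -((s : ℂ) ^ n) := by rw [← hfn j, hfj, one_pow]
    have h2 : (1 : ℝ) = -(s ^ n) := by
      have := congrArg Complex.re this
      simpa [← Complex.ofReal_pow] using this
    nlinarith [pow_nonneg hs n]
  -- product identity
  have hroots : Polynomial.nthRoots n (-((s : ℂ) ^ n)) = (Multiset.range n).map f :=
    hζ.nthRoots_eq hαn
  have hprod : ∏ j ∈ Finset.range n, (1 - f j) = 1 + (s : ℂ) ^ n := by
    have hmonic := Polynomial.monic_X_pow_sub_C (-((s : ℂ) ^ n)) hn.ne'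
    have hcard : Multiset.card (Polynomial.X ^ n - Polynomial.C (-((s : ℂ) ^ n))).roots
        = (Polynomial.X ^ n - Polynomial.C (-((s : ℂ) ^ n))).natDegree := by
      rw [Polynomial.natDegree_X_pow_sub_C]
      have : (Polynomial.X ^ n - Polynomial.C (-((s : ℂ) ^ n))).roots
          = Polynomial.nthRoots n (-((s : ℂ) ^ n)) := rfl
      rw [this, hroots, Multiset.card_map, Multiset.card_range]
    have hXn := Polynomial.prod_multiset_X_sub_C_of_monic_of_roots_card_eq hmonic hcard
    have heval := congrArg (Polynomial.eval 1) hXn.symm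
    rw [Polynomial.eval_multiset_prod] at heval
    have : (Polynomial.X ^ n - Polynomial.C (-((s : ℂ) ^ n))).roots
        = Polynomial.nthRoots n (-((s : ℂ) ^ n)) := rfl
    rw [this, hroots] at heval
    simp only [Multiset.map_map, Function.comp] at heval
    rw [Finset.prod_eq_multiset_prod]
    rw [Finset.range_val]
    convert heval.symm using 2
    · ext j
      simp [Polynomial.eval_sub, Polynomial.eval_X, Polynomial.eval_C]
    · simp
    · rw [Polynomial.eval_sub, Polynomial.eval_pow, Polynomial.eval_X, Polynomial.eval_C, one_pow,
        sub_neg_eq_add]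
  have hsum : ∀ k, 1 ≤ k → k ≤ q → ∑ j ∈ Finset.range n, f j ^ k = 0 := by
    intro k hk1 hkq
    have : ∀ j, f j ^ k = α ^ k * (ζ ^ k) ^ j := by
      intro j
      show (ζ ^ j * α) ^ k = α ^ k * (ζ ^ k) ^ j
      rw [mul_pow, ← pow_mul, mul_comm j k, pow_mul, mul_comm]
    simp only [this]
    rw [← Finset.mul_sum]
    have hζk : ζ ^ k ≠ 1 := hζ.pow_ne_one_of_pos_of_lt (by omega) (by omega)
    rw [geom_sum_eq hζk, ← pow_mul, mul_comm k n, pow_mul, hζ.pow_eq_one, one_pow, sub_self,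
      zero_div, mul_zero]
  have htot : ∑ j ∈ Finset.range n, weierstrassKernel q (f j) = Real.log (1 + s ^ n) := by
    unfold weierstrassKernel
    rw [Finset.sum_add_distrib]
    have hlog : ∑ j ∈ Finset.range n, Real.log (‖1 - f j‖)
        = Real.log (1 + s ^ n) := by
      rw [← Real.log_prod (fun j _ => norm_ne_zero_iff.mpr (hne1 j))]
      congr 1
      rw [← norm_prod, hprod]
      push_cast
      rw [show ((1 : ℂ) + (s : ℂ) ^ n) = (((1 + s ^ n : ℝ)) : ℂ) by push_cast; ring,
        Complex.norm_real, Real.norm_eq_abs, abs_of_nonneg (by linarith [pow_nonneg hs n])]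
    have hpoly : ∑ j ∈ Finset.range n, ∑ k ∈ Finset.Icc 1 q, (f j ^ k / (k : ℂ)).re = 0 := by
      rw [Finset.sum_comm]
      apply Finset.sum_eq_zero
      intro k hk
      obtain ⟨hk1, hkq⟩ := Finset.mem_Icc.mp hk
      have : ∑ j ∈ Finset.range n, (f j ^ k / (k : ℂ)).re
          = ((∑ j ∈ Finset.range n, f j ^ k) / (k : ℂ)).re := by
        rw [Finset.sum_div, Complex.re_sum]
      rw [this, hsum k hk1 hkq, zero_div, Complex.zero_re]
    rw [hlog, hpoly, add_zero]
  have hexists : ∃ j ∈ Finset.range n, 0 ≤ weierstrassKernel q (f j) := by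
    by_contra hcon
    push_neg at hcon
    have : ∑ j ∈ Finset.range n, weierstrassKernel q (f j) < 0 :=
      Finset.sum_neg hcon ⟨0, Finset.mem_range.mpr hn⟩
    rw [htot] at this
    exact absurd this (not_lt.mpr (Real.log_nonneg (by linarith [pow_nonneg hs n])))
  obtain ⟨j, _, hj⟩ := hexists
  exact hj.trans (wk_le_maxKernel q (habs j))


lemma wk_le_small (q : ℕ) {z : ℂ} {s : ℝ} (hz : ‖z‖ = s) (hs2 : s ≤ 1/2) :
    weierstrassKernel q z ≤ 2 * s ^ (q + 1) := by
  have hs0 : 0 ≤ s := hz ▸ norm_nonneg z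
  have hz1 : ‖z‖ < 1 := by rw [hz]; linarith
  have hfull : HasSum (fun k : ℕ => z ^ k / k) (-Complex.log (1 - z)) :=
    Complex.hasSum_taylorSeries_neg_log hz1
  set T : ℂ := -Complex.log (1 - z) - ∑ k ∈ Finset.range (q + 1), z ^ k / k with hT_def
  have htail : HasSum (fun k : ℕ => z ^ (k + (q + 1)) / ((k + (q + 1) : ℕ) : ℂ)) T :=
    (hasSum_nat_add_iff' (q + 1)).mpr hfull
  have h0 : Finset.range (q + 1) = insert 0 (Finset.Icc 1 q) := by
    ext k; simp only [Finset.mem_range, Finset.mem_insert, Finset.mem_Icc]; omega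
  have hnegT : -T = Complex.log (1 - z) + ∑ k ∈ Finset.Icc 1 q, z ^ k / k := by
    rw [hT_def, h0, Finset.sum_insert (by simp)]
    simp only [pow_zero, Nat.cast_zero, div_zero]
    ring
  have hwk : weierstrassKernel q z = (-T).re := by
    rw [hnegT, Complex.add_re, Complex.log_re, Complex.re_sum]
    rfl
  have hb : ∀ k : ℕ, ‖z ^ (k + (q + 1)) / ((k + (q + 1) : ℕ) : ℂ)‖ ≤ s ^ (q + 1) * s ^ k := by
    intro k
    rw [norm_div, norm_pow, hz, Complex.norm_natCast]
    have h1 : (1 : ℝ) ≤ ((k + (q + 1) : ℕ) : ℝ) := by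
      exact_mod_cast Nat.one_le_iff_ne_zero.mpr (by omega)
    calc s ^ (k + (q + 1)) / ((k + (q + 1) : ℕ) : ℝ) ≤ s ^ (k + (q + 1)) :=
          div_le_self (pow_nonneg hs0 _) h1
      _ = s ^ (q + 1) * s ^ k := by rw [pow_add]; ring
  have hgeo : Summable (fun k : ℕ => s ^ (q + 1) * s ^ k) :=
    (summable_geometric_of_lt_one hs0 (by linarith)).mul_left _
  have hsn : Summable (fun k : ℕ => ‖z ^ (k + (q + 1)) / ((k + (q + 1) : ℕ) : ℂ)‖) :=
    Summable.of_nonneg_of_le (fun k => norm_nonneg _) hb hgeo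
  have habsT : ‖T‖ ≤ 2 * s ^ (q + 1) := by
    rw [← htail.tsum_eq]
    calc ‖∑' k : ℕ, z ^ (k + (q + 1)) / ((k + (q + 1) : ℕ) : ℂ)‖
        ≤ ∑' k : ℕ, ‖z ^ (k + (q + 1)) / ((k + (q + 1) : ℕ) : ℂ)‖ := norm_tsum_le_tsum_norm hsn
      _ ≤ ∑' k : ℕ, s ^ (q + 1) * s ^ k := Summable.tsum_le_tsum hb hsn hgeo
      _ = s ^ (q + 1) * (1 - s)⁻¹ := by
          rw [tsum_mul_left, tsum_geometric_of_lt_one hs0 (by linarith)]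
      _ ≤ s ^ (q + 1) * 2 := by
          have h2 : (1 - s)⁻¹ ≤ 2 := by
            rw [show (2 : ℝ) = ((1:ℝ)/2)⁻¹ by norm_num]
            exact inv_anti₀ (by norm_num) (by linarith)
          exact mul_le_mul_of_nonneg_left h2 (pow_nonneg hs0 _)
      _ = 2 * s ^ (q + 1) := by ring
  calc weierstrassKernel q z = (-T).re := hwk
    _ ≤ ‖-T‖ := Complex.re_le_norm _
    _ = ‖T‖ := norm_neg T
    _ ≤ 2 * s ^ (q + 1) := habsT

lemma maxKernel_le_small (q : ℕ) {s : ℝ} (hs0 : 0 ≤ s) (hs2 : s ≤ 1/2) :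
    maxKernel q s ≤ 2 * s ^ (q + 1) :=
  maxKernel_le q hs0 fun _ hw => wk_le_small q hw hs2


/-- A measurable function agreeing with `maxKernel q` on `[0, ∞)`. -/
noncomputable def G (q : ℕ) (s : ℝ) : ℝ :=
  max (weierstrassKernel q (s : ℂ))
    (⨆ θ : ℚ, weierstrassKernel q ((s : ℂ) * Complex.exp ((θ : ℂ) * Complex.I)))

lemma measurable_wk_comp (q : ℕ) {c : ℝ → ℂ} (hc : Continuous c) :
    Measurable fun s => weierstrassKernel q (c s) := by
  unfold weierstrassKernel
  apply Measurable.add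
  · exact Real.measurable_log.comp
      (continuous_norm.comp (continuous_const.sub hc)).measurable
  · exact (continuous_finset_sum _ fun k _ =>
      Complex.continuous_re.comp ((hc.pow k).div_const _)).measurable

lemma abs_coe_mul_exp {s : ℝ} (hs : 0 ≤ s) (θ : ℝ) :
    ‖(s : ℂ) * Complex.exp ((θ : ℂ) * Complex.I)‖ = s := by
  rw [norm_mul, Complex.norm_exp_ofReal_mul_I, Complex.norm_real, Real.norm_eq_abs, abs_of_nonneg hs, mul_one]

lemma bddAbove_range_G (q : ℕ) {s : ℝ} (hs : 0 ≤ s) :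
    BddAbove (Set.range fun θ : ℚ =>
      weierstrassKernel q ((s : ℂ) * Complex.exp ((θ : ℂ) * Complex.I))) := by
  refine ⟨bnd q s, ?_⟩
  rintro x ⟨θ, rfl⟩
  exact wk_le_bnd q (abs_coe_mul_exp hs θ)

lemma measurable_G (q : ℕ) : Measurable (G q) := by
  unfold G
  apply Measurable.max
  · exact measurable_wk_comp q Complex.continuous_ofReal
  · exact Measurable.iSup fun θ : ℚ =>
      measurable_wk_comp q (Complex.continuous_ofReal.mul continuous_const)

lemma maxKernel_eq_G (q : ℕ) {s : ℝ} (hs : 0 ≤ s) : maxKernel q s = G q s := by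
  apply le_antisymm
  · apply maxKernel_le q hs
    intro w hw
    rcases eq_or_ne w ((s : ℂ)) with rfl | hw1
    · exact le_max_left _ _
    -- w ≠ s ; in particular if w = 1 then s ≠ 1... careful: w=1 possible with s=1 means w = s, excluded
    · have hwne1 : w ≠ 1 := by
        intro h
        subst h
        have : s = 1 := by simpa using hw.symm
        exact hw1 (by rw [this]; norm_num)
      have hs_pos : 0 < s := by
        rcases lt_or_eq_of_le hs with h | h
        · exact h
        · exfalso
          apply hw1
          have hw0 : w = 0 := norm_eq_zero.mp (by rw [hw, ← h])
          rw [hw0, ← h]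
          norm_num
      -- w = s * exp(arg w * I)
      have hw_eq : (s : ℂ) * Complex.exp ((Complex.arg w : ℂ) * Complex.I) = w := by
        rw [← hw]; exact Complex.norm_mul_exp_arg_mul_I w
      -- continuity of θ ↦ wk (s exp(θ I)) at arg w
      have hcont : ContinuousAt (fun θ : ℝ =>
          weierstrassKernel q ((s : ℂ) * Complex.exp ((θ : ℂ) * Complex.I))) (Complex.arg w) := by
        have hmap : Continuous fun θ : ℝ => (s : ℂ) * Complex.exp ((θ : ℂ) * Complex.I) :=
          continuous_const.mul ((Complex.continuous_ofReal.mul continuous_const).cexp)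
        unfold weierstrassKernel
        have habs0 : ‖1 - (s : ℂ) * Complex.exp ((Complex.arg w : ℂ) * Complex.I)‖ ≠ 0 := by
          rw [hw_eq]
          simpa [sub_eq_zero] using (Ne.symm hwne1)
        have hin : ContinuousAt
            (fun θ : ℝ => ‖1 - (s : ℂ) * Complex.exp ((θ : ℂ) * Complex.I)‖)
            (Complex.arg w) :=
          (continuous_norm.comp (continuous_const.sub hmap)).continuousAt
        have hlog : ContinuousAt (fun θ : ℝ =>
            Real.log (‖1 - (s : ℂ) * Complex.exp ((θ : ℂ) * Complex.I)‖))
            (Complex.arg w) := hin.log habs0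
        exact hlog.add ((continuous_finset_sum _ fun k _ =>
            Complex.continuous_re.comp ((hmap.pow k).div_const _)).continuousAt)
      rw [show weierstrassKernel q w = (fun θ : ℝ =>
          weierstrassKernel q ((s : ℂ) * Complex.exp ((θ : ℂ) * Complex.I))) (Complex.arg w) by
        simp only [hw_eq]]
      set φ : ℝ → ℝ := fun θ =>
        weierstrassKernel q ((s : ℂ) * Complex.exp ((θ : ℂ) * Complex.I)) with hφ
      -- φ (arg w) ≤ G q s using density of ℚ
      refine le_trans ?_ (le_max_right _ _)
      refine le_of_forall_pos_le_add ?_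
      intro δ hδ
      obtain ⟨ε, hε, hεδ⟩ := Metric.continuousAt_iff.mp hcont δ hδ
      obtain ⟨θ, hθ1, hθ2⟩ := exists_rat_btwn
        (show Complex.arg w - ε < Complex.arg w + ε by linarith)
      have hdist : dist ((θ : ℚ) : ℝ) (Complex.arg w) < ε := by
        rw [Real.dist_eq, abs_sub_lt_iff]
        constructor <;> linarith
      have hclose := hεδ hdist
      rw [Real.dist_eq] at hclose
      have h1 : φ (Complex.arg w) ≤ φ ((θ : ℚ) : ℝ) + δ := by
        have h2 := abs_sub_lt_iff.mp hclose
        have ha := h2.1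
        have hb := h2.2
        linarith
      refine h1.trans (add_le_add ?_ le_rfl)
      have hcast : φ ((θ : ℚ) : ℝ)
          = weierstrassKernel q ((s : ℂ) * Complex.exp ((θ : ℂ) * Complex.I)) := by
        rw [hφ]
        norm_num
      rw [hcast]
      exact le_ciSup (bddAbove_range_G q hs) θ
  · apply max_le
    · exact wk_le_maxKernel q (by rw [Complex.norm_real, Real.norm_eq_abs, abs_of_nonneg hs])
    · exact ciSup_le fun θ => wk_le_maxKernel q (abs_coe_mul_exp hs θ)


lemma ae_eps_le {μ : Measure ℂ} {ε : ℝ} (hμε : μ (Metric.ball (0 : ℂ) ε) = 0) :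
    ∀ᵐ w ∂μ, ε ≤ ‖w‖ := by
  rw [ae_iff]
  refine measure_mono_null ?_ hμε
  intro w hw
  simp only [Set.mem_setOf_eq, not_le] at hw
  simpa [Metric.mem_ball, Complex.dist_eq] using hw

/-- Consequence of finite type: polynomial bound beyond some `t₁ ≥ 1`. -/
lemma finiteType_bound {μ : Measure ℂ} {ρ : ℝ} (hft : HasFiniteType μ ρ) :
    ∃ C : ℝ≥0∞, C ≠ ⊤ ∧ ∃ t₁ : ℝ, 1 ≤ t₁ ∧
      ∀ t : ℝ, t₁ ≤ t → μ (Metric.closedBall 0 t) ≤ C * ENNReal.ofReal (t ^ ρ) := by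
  set L := Filter.limsup (fun t : ℝ => μ (Metric.closedBall 0 t) / ENNReal.ofReal (t ^ ρ))
    Filter.atTop with hL_def
  have hL : L < ⊤ := hft
  have hlt : L < L + 1 := ENNReal.lt_add_right hL.ne one_ne_zero
  obtain ⟨t₀, ht₀⟩ := eventually_atTop.mp (Filter.eventually_lt_of_limsup_lt hlt)
  refine ⟨L + 1, by simp [hL.ne], max t₀ 1, le_max_right _ _, ?_⟩
  intro t ht
  have h1t : (1 : ℝ) ≤ t := le_trans (le_max_right _ _) ht
  have hlt' := ht₀ t (le_trans (le_max_left _ _) ht)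
  have hpos : 0 < t ^ ρ := Real.rpow_pos_of_pos (by linarith) ρ
  have h0 : ENNReal.ofReal (t ^ ρ) ≠ 0 := by
    simp [ENNReal.ofReal_eq_zero, not_le, hpos]
  rw [ENNReal.div_lt_iff (Or.inl h0) (Or.inl ENNReal.ofReal_ne_top)] at hlt'
  exact le_of_lt hlt'

lemma integrable_maxKernel (q : ℕ) (ρ : ℝ) (hρ : 0 < ρ) (hρq : ρ < q + 1)
    (μ : Measure ℂ) {ε : ℝ} (hε : 0 < ε) (hμε : μ (Metric.ball (0 : ℂ) ε) = 0)
    (hft : HasFiniteType μ ρ) {r : ℝ} (hr0 : 0 ≤ r) :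
    Integrable (fun w => maxKernel q (r / ‖w‖)) μ := by
  have hae : ∀ᵐ w ∂μ, ε ≤ ‖w‖ := ae_eps_le hμε
  obtain ⟨C, hC, t₁, ht₁, hcb⟩ := finiteType_bound hft
  have hmabs : Measurable fun w : ℂ => ‖w‖ := continuous_norm.measurable
  have hfin : ∀ t : ℝ, μ (Metric.closedBall 0 t) < ⊤ := by
    intro t
    calc μ (Metric.closedBall 0 t) ≤ μ (Metric.closedBall 0 (max t t₁)) :=
          measure_mono (Metric.closedBall_subset_closedBall (le_max_left _ _))
      _ ≤ C * ENNReal.ofReal ((max t t₁) ^ ρ) := hcb _ (le_max_right _ _)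
      _ < ⊤ := ENNReal.mul_lt_top hC.lt_top ENNReal.ofReal_lt_top
  set T := max (2 * r) t₁ with hT_def
  have hT1 : (1 : ℝ) ≤ T := le_trans ht₁ (le_max_right _ _)
  have hT0 : (0 : ℝ) < T := lt_of_lt_of_le one_pos hT1
  have hT2r : 2 * r ≤ T := le_max_left _ _
  -- a.e. equality with measurable representative
  have haeq : (fun w => maxKernel q (r / ‖w‖))
      =ᵐ[μ] fun w => G q (r / ‖w‖) := by
    refine hae.mono fun w hw => ?_
    exact maxKernel_eq_G q (div_nonneg hr0 (le_trans hε.le hw))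
  have hmG : Measurable fun w : ℂ => G q (r / ‖w‖) :=
    (measurable_G q).comp (measurable_const.div hmabs)
  constructor
  · exact hmG.aestronglyMeasurable.congr haeq.symm
  · rw [hasFiniteIntegral_iff_norm]
    have hsplit := lintegral_add_compl
      (fun w => ENNReal.ofReal ‖maxKernel q (r / ‖w‖)‖)
      (measurableSet_closedBall (x := (0 : ℂ)) (ε := T)) (μ := μ)
    rw [← hsplit]
    apply ENNReal.add_lt_top.mpr
    constructor
    · -- inner part
      set M := bnd q (r / ε) with hM_def
      have hb : ∀ᵐ w ∂μ, ENNReal.ofReal ‖maxKernel q (r / ‖w‖)‖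
          ≤ ENNReal.ofReal M := by
        refine hae.mono fun w hw => ?_
        have hw0 : (0 : ℝ) < ‖w‖ := lt_of_lt_of_le hε hw
        have hs0 : 0 ≤ r / ‖w‖ := div_nonneg hr0 hw0.le
        apply ENNReal.ofReal_le_ofReal
        rw [Real.norm_eq_abs, abs_of_nonneg (maxKernel_nonneg q hs0)]
        calc maxKernel q (r / ‖w‖) ≤ bnd q (r / ‖w‖) :=
              maxKernel_le_bnd q hs0
          _ ≤ M := bnd_mono q hs0 (div_le_div_of_nonneg_left hr0 hε hw)
      calc ∫⁻ w in Metric.closedBall 0 T,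
            ENNReal.ofReal ‖maxKernel q (r / ‖w‖)‖ ∂μ
          ≤ ∫⁻ _ in Metric.closedBall 0 T, ENNReal.ofReal M ∂μ :=
            lintegral_mono_ae (ae_restrict_of_ae hb)
        _ = ENNReal.ofReal M * μ (Metric.closedBall 0 T) := setLIntegral_const _ _
        _ < ⊤ := ENNReal.mul_lt_top ENNReal.ofReal_lt_top (hfin T)
    · -- outer part
      set p := q + 1 with hp_def
      set u : ℕ → ℝ := fun n => T * 2 ^ n with hu_def
      have hu : ∀ n, 0 < u n := fun n => mul_pos hT0 (pow_pos two_pos n)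
      set A : ℕ → Set ℂ := fun n =>
        (fun w => ‖w‖) ⁻¹' (Set.Ioc (u n) (u (n + 1))) with hA_def
      have hA_meas : ∀ n, MeasurableSet (A n) := fun n => hmabs measurableSet_Ioc
      have hu_succ : ∀ n, u (n + 1) = 2 * u n := by
        intro n; simp only [hu_def]; rw [pow_succ]; ring
      -- covering
      have hsub : (Metric.closedBall (0 : ℂ) T)ᶜ ⊆ ⋃ n, A n := by
        intro w hw
        simp only [Set.mem_compl_iff, Metric.mem_closedBall, Complex.dist_eq, sub_zero,
          not_le] at hw
        have hex : ∃ n : ℕ, ‖w‖ ≤ u (n + 1) := by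
          obtain ⟨n, hn⟩ := pow_unbounded_of_one_lt (‖w‖ / T) one_lt_two
          rw [div_lt_iff₀ hT0] at hn
          refine ⟨n, le_of_lt ?_⟩
          rw [hu_succ]
          have h2n : (0 : ℝ) < 2 ^ n := pow_pos two_pos n
          calc ‖w‖ < 2 ^ n * T := hn
            _ ≤ 2 * (T * 2 ^ n) := by nlinarith
        classical
        set n₀ := Nat.find hex with hn₀_def
        refine Set.mem_iUnion.mpr ⟨n₀, ?_, Nat.find_spec hex⟩
        rcases Nat.eq_zero_or_pos n₀ with h0 | hpos
        · rw [h0]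
          simpa [hu_def] using hw
        · have hmin := Nat.find_min hex (show n₀ - 1 < n₀ from Nat.sub_lt hpos one_pos)
          rw [not_le] at hmin
          have : n₀ - 1 + 1 = n₀ := Nat.succ_pred_eq_of_pos hpos
          rwa [this] at hmin
      -- pointwise bound on A n
      have hbound : ∀ n, ∀ w ∈ A n,
          ENNReal.ofReal ‖maxKernel q (r / ‖w‖)‖
          ≤ ENNReal.ofReal (2 * (r / u n) ^ p) := by
        intro n w hw
        simp only [hA_def, Set.mem_preimage, Set.mem_Ioc] at hw
        obtain ⟨hw1, hw2⟩ := hw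
        have hwpos : (0 : ℝ) < ‖w‖ := lt_trans (hu n) hw1
        have hs0 : 0 ≤ r / ‖w‖ := div_nonneg hr0 hwpos.le
        have hsle : r / ‖w‖ ≤ r / u n :=
          div_le_div_of_nonneg_left hr0 (hu n) hw1.le
        have h2n1 : (1 : ℝ) ≤ 2 ^ n := by exact_mod_cast Nat.one_le_two_pow (n := n)
        have hTun : T ≤ u n := by
          rw [hu_def]
          exact le_mul_of_one_le_right hT0.le h2n1
        have hs2 : r / ‖w‖ ≤ 1 / 2 := by
          have h2r : 2 * r ≤ ‖w‖ := le_trans (hT2r.trans hTun) hw1.le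
          rw [div_le_div_iff₀ hwpos (by norm_num : (0:ℝ) < 2)]
          linarith
        apply ENNReal.ofReal_le_ofReal
        rw [Real.norm_eq_abs, abs_of_nonneg (maxKernel_nonneg q hs0)]
        calc maxKernel q (r / ‖w‖) ≤ 2 * (r / ‖w‖) ^ p :=
              maxKernel_le_small q hs0 hs2
          _ ≤ 2 * (r / u n) ^ p := by gcongr
      -- geometric control
      set a : ℝ := (2 : ℝ) ^ (ρ - (p : ℝ)) with ha_def
      have hpρ : ρ - (p : ℝ) < 0 := by
        have : ρ < (p : ℝ) := by rw [hp_def]; push_cast; linarith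
        linarith
      have ha1 : a < 1 := Real.rpow_lt_one_of_one_lt_of_neg one_lt_two hpρ
      have ha0 : 0 ≤ a := Real.rpow_nonneg (by norm_num) _
      set K : ℝ := 2 * r ^ p * 2 ^ ρ * T ^ (ρ - (p : ℝ)) with hK_def
      have hK0 : 0 ≤ K := by
        rw [hK_def]
        have := Real.rpow_nonneg hT0.le (ρ - (p : ℝ))
        have := Real.rpow_nonneg (show (0:ℝ) ≤ 2 by norm_num) ρ
        positivity
      have key : ∀ n, 2 * (r / u n) ^ p * (2 * u n) ^ ρ = K * a ^ n := by
        intro n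
        have hupos := hu n
        have h2n : (0 : ℝ) < (2 : ℝ) ^ n := pow_pos two_pos n
        have h1 : (u n) ^ (ρ - (p : ℝ)) = u n ^ ρ / u n ^ p := by
          rw [Real.rpow_sub hupos, Real.rpow_natCast]
        have h2 : (u n) ^ (ρ - (p : ℝ)) = T ^ (ρ - (p : ℝ)) * a ^ n := by
          rw [show u n = T * 2 ^ n from rfl, Real.mul_rpow hT0.le h2n.le]
          congr 1
          rw [← Real.rpow_natCast (2 : ℝ) n, ← Real.rpow_mul (by norm_num),
            mul_comm ((n : ℝ)) (ρ - (p : ℝ)), Real.rpow_mul (by norm_num),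
            Real.rpow_natCast]
        have h3 : (2 * u n) ^ ρ = 2 ^ ρ * u n ^ ρ := Real.mul_rpow (by norm_num) hupos.le
        have hun_ne : (u n) ^ p ≠ 0 := (pow_pos hupos p).ne'
        calc 2 * (r / u n) ^ p * (2 * u n) ^ ρ
            = 2 * r ^ p * 2 ^ ρ * (u n ^ ρ / u n ^ p) := by
              rw [div_pow, h3]; ring
          _ = 2 * r ^ p * 2 ^ ρ * (u n ^ (ρ - (p : ℝ))) := by rw [h1]
          _ = 2 * r ^ p * 2 ^ ρ * (T ^ (ρ - (p : ℝ)) * a ^ n) := by rw [h2]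
          _ = K * a ^ n := by rw [hK_def]; ring
      calc ∫⁻ w in (Metric.closedBall (0:ℂ) T)ᶜ,
            ENNReal.ofReal ‖maxKernel q (r / ‖w‖)‖ ∂μ
          ≤ ∫⁻ w in ⋃ n, A n, ENNReal.ofReal ‖maxKernel q (r / ‖w‖)‖ ∂μ :=
            lintegral_mono_set hsub
        _ ≤ ∑' n, ∫⁻ w in A n, ENNReal.ofReal ‖maxKernel q (r / ‖w‖)‖ ∂μ :=
            lintegral_iUnion_le _ _
        _ ≤ ∑' n, (C * ENNReal.ofReal K) * (ENNReal.ofReal a) ^ n := by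
            refine ENNReal.tsum_le_tsum fun n => ?_
            have hstep1 : ∫⁻ w in A n, ENNReal.ofReal ‖maxKernel q (r / ‖w‖)‖ ∂μ
                ≤ ENNReal.ofReal (2 * (r / u n) ^ p) * μ (A n) := by
              calc ∫⁻ w in A n, ENNReal.ofReal ‖maxKernel q (r / ‖w‖)‖ ∂μ
                  ≤ ∫⁻ _ in A n, ENNReal.ofReal (2 * (r / u n) ^ p) ∂μ :=
                    setLIntegral_mono measurable_const (hbound n)
                _ = ENNReal.ofReal (2 * (r / u n) ^ p) * μ (A n) := setLIntegral_const _ _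
            have hAsub : A n ⊆ Metric.closedBall (0 : ℂ) (u (n + 1)) := by
              intro w hw
              simp only [hA_def, Set.mem_preimage, Set.mem_Ioc] at hw
              simpa [Metric.mem_closedBall, Complex.dist_eq] using hw.2
            have hTu : T ≤ u (n + 1) := by
              have h2n1 : (1 : ℝ) ≤ 2 ^ (n + 1) := by
                exact_mod_cast Nat.one_le_two_pow (n := n + 1)
              show T ≤ T * 2 ^ (n + 1)
              exact le_mul_of_one_le_right hT0.le h2n1
            have hμA : μ (A n) ≤ C * ENNReal.ofReal ((2 * u n) ^ ρ) := by
              rw [← hu_succ]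
              exact le_trans (measure_mono hAsub)
                (hcb _ (le_trans (le_max_right (2 * r) t₁) hTu))
            calc ∫⁻ w in A n, ENNReal.ofReal ‖maxKernel q (r / ‖w‖)‖ ∂μ
                ≤ ENNReal.ofReal (2 * (r / u n) ^ p) * (C * ENNReal.ofReal ((2 * u n) ^ ρ)) := by
                  exact le_trans hstep1 (mul_le_mul_right hμA _)
              _ = C * (ENNReal.ofReal (2 * (r / u n) ^ p) * ENNReal.ofReal ((2 * u n) ^ ρ)) := by
                  ring
              _ = C * ENNReal.ofReal (2 * (r / u n) ^ p * (2 * u n) ^ ρ) := by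
                  rw [← ENNReal.ofReal_mul (by positivity)]
              _ = C * ENNReal.ofReal (K * a ^ n) := by rw [key n]
              _ = (C * ENNReal.ofReal K) * (ENNReal.ofReal a) ^ n := by
                  rw [ENNReal.ofReal_mul hK0, ENNReal.ofReal_pow ha0]; ring
        _ = (C * ENNReal.ofReal K) * ∑' n, (ENNReal.ofReal a) ^ n := ENNReal.tsum_mul_left
        _ = (C * ENNReal.ofReal K) * (1 - ENNReal.ofReal a)⁻¹ := by
            rw [ENNReal.tsum_geometric]
        _ < ⊤ := by
            apply ENNReal.mul_lt_top
            · exact ENNReal.mul_lt_top hC.lt_top ENNReal.ofReal_lt_top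
            · rw [ENNReal.inv_lt_top]
              exact tsub_pos_iff_lt.mpr (ENNReal.ofReal_lt_one.mpr ha1)

end ValironAux

/-- For `ρ > 0`, `q = ⌊ρ⌋`, and a positive Borel measure `μ` on `ℂ`
whose support avoids `0` and whose counting function has finite type at order `ρ`,
for every `z` with `|z| = r` one has `U_q^μ(z) ≤ ∫_0^∞ 𝓜_q(r/t) dμ^rad(t)`.
The Lebesgue–Stieltjes measure of the increasing function `μ^rad` on `(0,∞)` is the
pushforward of `μ` under `w ↦ |w|`. -/
theorem valiron_stmt0 (ρ : ℝ) (hρ : 0 < ρ) (q : ℕ) (hq : q = ⌊ρ⌋₊)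
    (μ : Measure ℂ) (hsupp : SuppAvoidsZero μ) (hft : HasFiniteType μ ρ)
    (z : ℂ) (r : ℝ) (hr : ‖z‖ = r) :
    hwIntegral q μ z ≤
      ∫ t in Set.Ioi (0:ℝ), maxKernel q (r / t)
        ∂(Measure.map (fun w : ℂ => ‖w‖) μ) := by
  obtain ⟨ε, hε, hμε⟩ := hsupp
  have hr0 : 0 ≤ r := hr ▸ norm_nonneg z
  have hae : ∀ᵐ w ∂μ, ε ≤ ‖w‖ := ValironAux.ae_eps_le hμε
  have hmabs : Measurable fun w : ℂ => ‖w‖ := continuous_norm.measurable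
  have hρq : ρ < q + 1 := by
    rw [hq]
    exact_mod_cast Nat.lt_floor_add_one ρ
  set ν := Measure.map (fun w : ℂ => ‖w‖) μ with hν
  have hν_ae : ∀ᵐ t ∂ν, ε ≤ t := by
    rw [hν]
    exact (MeasureTheory.ae_map_iff (p := fun t => ε ≤ t) hmabs.aemeasurable
      measurableSet_Ici).mpr hae
  have hres : ν.restrict (Set.Ioi 0) = ν :=
    Measure.restrict_eq_self_of_ae_mem (hν_ae.mono fun t ht => lt_of_lt_of_le hε ht)
  have hstep1 : ∫ t in Set.Ioi (0:ℝ), maxKernel q (r / t) ∂ν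
      = ∫ w, maxKernel q (r / ‖w‖) ∂μ := by
    rw [hres]
    have h1 : ∫ t, maxKernel q (r / t) ∂ν = ∫ t, ValironAux.G q (r / t) ∂ν :=
      integral_congr_ae (hν_ae.mono fun t ht =>
        ValironAux.maxKernel_eq_G q (div_nonneg hr0 (le_trans hε.le ht)))
    have hGm : Measurable fun t : ℝ => ValironAux.G q (r / t) :=
      (ValironAux.measurable_G q).comp (measurable_const.div measurable_id)
    have h2 : ∫ t, ValironAux.G q (r / t) ∂ν = ∫ w, ValironAux.G q (r / ‖w‖) ∂μ :=
      MeasureTheory.integral_map hmabs.aemeasurable hGm.aestronglyMeasurable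
    have h3 : ∫ w, ValironAux.G q (r / ‖w‖) ∂μ
        = ∫ w, maxKernel q (r / ‖w‖) ∂μ :=
      integral_congr_ae (hae.mono fun w hw =>
        (ValironAux.maxKernel_eq_G q (div_nonneg hr0 (le_trans hε.le hw))).symm)
    rw [h1, h2, h3]
  rw [hstep1]
  have hint : Integrable (fun w => maxKernel q (r / ‖w‖)) μ :=
    ValironAux.integrable_maxKernel q ρ hρ hρq μ hε hμε hft hr0
  have hle : ∀ᵐ w ∂μ, weierstrassKernel q (z / w) ≤ maxKernel q (r / ‖w‖) :=
    hae.mono fun w _ => ValironAux.wk_le_maxKernel q (by rw [norm_div, hr])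
  show (∫ w, weierstrassKernel q (z / w) ∂μ) ≤ _
  by_cases hf : Integrable (fun w => weierstrassKernel q (z / w)) μ
  · exact integral_mono_ae hf hint hle
  · rw [integral_undef hf]
    exact integral_nonneg_of_ae (hae.mono fun w hw =>
      ValironAux.maxKernel_nonneg q (div_nonneg hr0 (le_trans hε.le hw)))
end

section
/- Let ρ > 0 be a real number, q = ⌊ρ⌋, and let μ be a positive Borel measure on ℂ whose support does not contain 0 and whose counting function μ^rad has finite type at order ρ. Then for every r ≥ 0 one has ∫_0^∞ (r/t) 𝓜_q'(r/t) dN_μ(t) = ∫_0^∞ N_μ(r/t) d(t 𝓜_q'(t)), where both sides are Lebesgue–Stieltjes integrals with respect to the increasing functions N_μ and t ↦ t𝓜_q'(t) respectively, and 𝓜_q' denotes the right derivative of 𝓜_q. -/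
open MeasureTheory Filter

open Set

open scoped ENNReal

section KernelAux

open Complex Set

noncomputable def wFactor (q : ℕ) (z : ℂ) : ℂ :=
  (1 - z) * Complex.exp (∑ k ∈ Finset.Icc 1 q, z ^ k / (k : ℂ))

lemma logTaylor_neg_eq (q : ℕ) (z : ℂ) :
    Complex.logTaylor (q + 1) (-z) = -∑ k ∈ Finset.Icc 1 q, z ^ k / (k : ℂ) := by
  have hins : Finset.range (q + 1) = insert 0 (Finset.Icc 1 q) := by
    ext j; simp [Nat.lt_succ_iff]; omega
  rw [Complex.logTaylor, hins, Finset.sum_insert (by simp), ← Finset.sum_neg_distrib]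
  simp only [pow_zero, Nat.cast_zero, div_zero, mul_zero, zero_add]
  refine Finset.sum_congr rfl fun k hk => ?_
  have h1 : (-1 : ℂ) ^ (k + 1) * (-z) ^ k = -z ^ k := by
    rw [neg_pow z k, ← mul_assoc, ← pow_add]
    have : Odd (k + 1 + k) := ⟨k, by ring⟩
    rw [this.neg_one_pow]; ring
  rw [h1, neg_div]

lemma wk_eq_re (q : ℕ) (z : ℂ) :
    weierstrassKernel q z
      = (Complex.log (1 - z) + ∑ k ∈ Finset.Icc 1 q, z ^ k / (k : ℂ)).re := by
  rw [weierstrassKernel, Complex.add_re, Complex.log_re, Complex.re_sum]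

lemma norm_log_add_sum_le (q : ℕ) {z : ℂ} (hz : ‖z‖ ≤ 1 / 2) :
    ‖Complex.log (1 - z) + ∑ k ∈ Finset.Icc 1 q, z ^ k / (k : ℂ)‖
      ≤ 2 * ‖z‖ ^ (q + 1) := by
  have hz1 : ‖(-z : ℂ)‖ < 1 := by rw [norm_neg]; linarith
  have h := Complex.norm_log_sub_logTaylor_le q hz1
  rw [logTaylor_neg_eq, sub_neg_eq_add] at h
  have h1z : (1 : ℂ) + -z = 1 - z := by ring
  rw [h1z, norm_neg] at h
  refine h.trans ?_
  have h0 : (0:ℝ) ≤ ‖z‖ := norm_nonneg _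
  have hinv : (1 - ‖z‖)⁻¹ ≤ 2 := by
    rw [inv_le_comm₀ (by linarith) (by norm_num)]; linarith
  have h2 : ‖z‖ ^ (q + 1) * (1 - ‖z‖)⁻¹ ≤ ‖z‖ ^ (q + 1) * 2 :=
    mul_le_mul_of_nonneg_left hinv (by positivity)
  have hq1 : (1:ℝ) ≤ (q:ℝ) + 1 := by
    have : (0:ℝ) ≤ (q:ℝ) := Nat.cast_nonneg q
    linarith
  have h3 : ‖z‖ ^ (q + 1) * (1 - ‖z‖)⁻¹ / ((q:ℝ) + 1) ≤ ‖z‖ ^ (q + 1) * (1 - ‖z‖)⁻¹ := by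
    apply div_le_self _ hq1
    have : (0:ℝ) < 1 - ‖z‖ := by linarith
    positivity
  push_cast at h ⊢
  linarith

lemma abs_wk_le (q : ℕ) {z : ℂ} (hz : ‖z‖ ≤ 1 / 2) :
    |weierstrassKernel q z| ≤ 2 * ‖z‖ ^ (q + 1) := by
  rw [wk_eq_re]
  exact (Complex.abs_re_le_norm _).trans (norm_log_add_sum_le q hz)

lemma one_sub_ne_zero' {z : ℂ} (hz : ‖z‖ ≤ 1 / 2) : (1 : ℂ) - z ≠ 0 := by
  intro h
  have h1 : (1:ℂ) = z := by linear_combination h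
  rw [← h1] at hz
  simp at hz; linarith

lemma abs_one_sub_ne_zero {z : ℂ} (hz : ‖z‖ ≤ 1 / 2) : ‖1 - z‖ ≠ 0 := by
  exact norm_ne_zero_iff.mpr (one_sub_ne_zero' hz)

lemma abs_wFactor_pos (q : ℕ) {z : ℂ} (hz : ‖z‖ ≤ 1 / 2) :
    0 < ‖wFactor q z‖ := by
  rw [wFactor]
  simp only [norm_mul, Complex.norm_exp]
  have h1 := abs_one_sub_ne_zero hz
  have h2 : 0 ≤ ‖1 - z‖ := norm_nonneg _
  have h3 : 0 < ‖1 - z‖ := lt_of_le_of_ne h2 (Ne.symm h1)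
  positivity

lemma wk_eq_log_abs (q : ℕ) {z : ℂ} (hz : ‖z‖ ≤ 1 / 2) :
    weierstrassKernel q z = Real.log ‖wFactor q z‖ := by
  rw [wFactor, norm_mul, Complex.norm_exp,
    Real.log_mul (abs_one_sub_ne_zero hz) (Real.exp_ne_zero _), Real.log_exp,
    weierstrassKernel, Complex.re_sum]

lemma wFactor_differentiable (q : ℕ) : Differentiable ℂ (wFactor q) := by
  apply Differentiable.mul
  · exact (differentiable_const _).sub differentiable_id
  · apply Differentiable.cexp
    apply Differentiable.fun_sum
    intro k _
    exact (differentiable_pow k).div_const _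

lemma wk_continuousAt (q : ℕ) {z : ℂ} (hz : ‖z‖ ≤ 1 / 2) :
    ContinuousAt (weierstrassKernel q) z := by
  have c1 : ContinuousAt (fun x : ℂ => (1:ℂ) - x) z :=
    (continuous_const.sub continuous_id).continuousAt
  have c2 : ContinuousAt (norm : ℂ → ℝ) ((1:ℂ) - z) := continuous_norm.continuousAt
  have c3 : ContinuousAt Real.log ‖1 - z‖ :=
    Real.continuousAt_log (abs_one_sub_ne_zero hz)
  exact ((c3.comp c2).comp c1).add (continuous_finset_sum _ fun k _ =>
      Complex.continuous_re.comp ((continuous_pow k).div_const _)).continuousAt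

lemma exists_maxKernel (q : ℕ) {r : ℝ} (hr0 : 0 ≤ r) (hr : r ≤ 1 / 2) :
    ∃ z : ℂ, ‖z‖ = r ∧ maxKernel q r = weierstrassKernel q z ∧
      ∀ w : ℂ, ‖w‖ = r → weierstrassKernel q w ≤ weierstrassKernel q z := by
  have hne : (Metric.sphere (0 : ℂ) r).Nonempty := NormedSpace.sphere_nonempty.mpr hr0
  have hcomp : IsCompact (Metric.sphere (0 : ℂ) r) := isCompact_sphere 0 r
  have hcont : ContinuousOn (weierstrassKernel q) (Metric.sphere (0 : ℂ) r) := by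
    intro z hz
    rw [mem_sphere_zero_iff_norm] at hz
    exact (wk_continuousAt q (by rw [hz]; exact hr)).continuousWithinAt
  obtain ⟨z, hzmem, hzmax⟩ := hcomp.exists_isMaxOn hne hcont
  have hzn : ‖z‖ = r := mem_sphere_zero_iff_norm.mp hzmem
  refine ⟨z, hzn, ?_, ?_⟩
  · apply IsGreatest.csSup_eq
    refine ⟨⟨z, hzmem, rfl⟩, ?_⟩
    rintro y ⟨w, hw, rfl⟩
    exact hzmax hw
  · intro w hw
    exact hzmax (mem_sphere_zero_iff_norm.mpr hw)

lemma abs_maxKernel_le (q : ℕ) {r : ℝ} (hr0 : 0 ≤ r) (hr : r ≤ 1 / 2) :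
    |maxKernel q r| ≤ 2 * r ^ (q + 1) := by
  obtain ⟨z, hz, heq, -⟩ := exists_maxKernel q hr0 hr
  rw [heq, ← hz]
  exact abs_wk_le q (hz ▸ hr)

lemma maxKernel_monotoneOn (q : ℕ) : MonotoneOn (maxKernel q) (Icc (0:ℝ) (1/2)) := by
  rintro r1 ⟨h10, h12⟩ r2 ⟨h20, h22⟩ h12le
  obtain ⟨z1, hz1, heq1, -⟩ := exists_maxKernel q h10 h12
  obtain ⟨z2, hz2, heq2, hmax2⟩ := exists_maxKernel q h20 h22
  rw [heq1, heq2]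
  rcases eq_or_lt_of_le h20 with h | h20pos
  · have hr1 : r1 = 0 := le_antisymm (h ▸ h12le) h10
    have e1 : z1 = 0 := by rw [← norm_eq_zero, hz1, hr1]
    have e2 : z2 = 0 := by rw [← norm_eq_zero, hz2, ← h]
    rw [e1, e2]
  · -- max modulus principle
    have hz1half : ‖z1‖ ≤ 1/2 := by rw [hz1]; exact h12le.trans h22
    have hfront : ∀ w ∈ frontier (Metric.ball (0:ℂ) r2),
        ‖wFactor q w‖ ≤ Real.exp (weierstrassKernel q z2) := by
      intro w hw
      rw [frontier_ball 0 (ne_of_gt h20pos), mem_sphere_zero_iff_norm] at hw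
      have hw2 : ‖w‖ ≤ 1/2 := hw ▸ h22
      calc ‖wFactor q w‖ = Real.exp (weierstrassKernel q w) := by
            rw [wk_eq_log_abs q hw2, Real.exp_log (abs_wFactor_pos q hw2)]
        _ ≤ Real.exp (weierstrassKernel q z2) := Real.exp_le_exp.mpr (hmax2 w hw)
    have hz1mem : z1 ∈ closure (Metric.ball (0:ℂ) r2) := by
      rw [closure_ball 0 (ne_of_gt h20pos), mem_closedBall_zero_iff, hz1]
      exact h12le
    have hbd := Complex.norm_le_of_forall_mem_frontier_norm_le
      Metric.isBounded_ball ((wFactor_differentiable q).diffContOnCl) hfront hz1mem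
    rw [wk_eq_log_abs q hz1half]
    calc Real.log ‖wFactor q z1‖
        ≤ Real.log (Real.exp (weierstrassKernel q z2)) := by
          apply Real.log_le_log (abs_wFactor_pos q hz1half) hbd
      _ = weierstrassKernel q z2 := Real.log_exp _

end KernelAux


section DerivAux

noncomputable def clampK (q : ℕ) : ℝ → ℝ := fun x => maxKernel q (min (max x 0) (1/2))

lemma clamp_mem (x : ℝ) : min (max x 0) (1/2) ∈ Icc (0:ℝ) (1/2) :=
  ⟨le_min (le_max_right _ _) (by norm_num), min_le_right _ _⟩

lemma clampK_mono (q : ℕ) : Monotone (clampK q) := by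
  intro x y hxy
  exact maxKernel_monotoneOn q (clamp_mem x) (clamp_mem y)
    (min_le_min (max_le_max hxy (le_refl _)) (le_refl _))

lemma clampK_eventuallyEq (q : ℕ) {x : ℝ} (hx : x ∈ Ioo (0:ℝ) (1/2)) :
    clampK q =ᶠ[nhds x] maxKernel q := by
  filter_upwards [Ioo_mem_nhds hx.1 hx.2] with y hy
  rw [clampK, max_eq_left hy.1.le, min_eq_left hy.2.le]

lemma maxKernelDeriv_nonneg (q : ℕ) {t : ℝ} (ht : t ∈ Ioo (0:ℝ) (1/2)) :
    0 ≤ maxKernelDeriv q t := by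
  by_cases h : DifferentiableWithinAt ℝ (maxKernel q) (Ici t) t
  · have hD := h.hasDerivWithinAt
    rw [hasDerivWithinAt_iff_tendsto_slope, Set.Ici_sdiff_left] at hD
    refine ge_of_tendsto hD ?_
    have hmem : Ioc t (1/2) ∈ nhdsWithin t (Ioi t) :=
      Ioc_mem_nhdsGT_of_mem ⟨le_refl t, ht.2⟩
    filter_upwards [hmem] with y hy
    rw [slope_def_field]
    apply div_nonneg
    · rw [sub_nonneg]
      exact maxKernel_monotoneOn q ⟨ht.1.le, ht.2.le⟩
        ⟨(ht.1.trans hy.1).le, hy.2⟩ hy.1.le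
    · linarith [hy.1]
  · rw [maxKernelDeriv, derivWithin_zero_of_not_differentiableWithinAt h]

variable {q : ℕ} {G : StieltjesFunction ℝ}
  (hG : ∀ t > (0:ℝ), G t = t * maxKernelDeriv q t)

include hG

lemma G_nonneg : ∀ t > (0:ℝ), 0 ≤ G t := by
  intro t ht
  rcases lt_or_ge t (1/2) with h | h
  · rw [hG t ht]
    exact mul_nonneg ht.le (maxKernelDeriv_nonneg q ⟨ht, h⟩)
  · have h1 : (0:ℝ) ≤ G (1/4) := by
      rw [hG (1/4) (by norm_num)]
      exact mul_nonneg (by norm_num) (maxKernelDeriv_nonneg q (by norm_num))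
    exact h1.trans (G.mono (by linarith))

lemma G_bound : ∀ a : ℝ, a ∈ Ioc (0:ℝ) (1/8) →
    G a ≤ (4 * 3^(q+1) + 4) * a^(q+1) := by
  intro a ha
  obtain ⟨ha0, ha8⟩ := ha
  set ψ := clampK q with hψdef
  have hψ := clampK_mono q
  set H := hψ.stieltjesFunction with hHdef
  set d := fun x => (H.measure.rnDeriv volume x).toReal with hddef
  have hae := hψ.ae_hasDerivAt
  -- pointwise facts on Ioo a (2a)
  have hkey : ∀ᵐ x ∂volume, x ∈ Ioo a (2*a) →
      ENNReal.ofReal (G a / (2*a)) ≤ H.measure.rnDeriv volume x := by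
    filter_upwards [hae] with x hx hxmem
    have hxI : x ∈ Ioo (0:ℝ) (1/2) := ⟨ha0.trans hxmem.1, by linarith [hxmem.2]⟩
    have hx' : HasDerivAt (maxKernel q) (d x) x :=
      hx.congr_of_eventuallyEq (clampK_eventuallyEq q hxI).symm
    have hDW : maxKernelDeriv q x = d x :=
      hx'.hasDerivWithinAt.derivWithin (uniqueDiffOn_Ici x x self_mem_Ici)
    have hd0 : 0 ≤ d x := ENNReal.toReal_nonneg
    have hGa : G a ≤ 2*a * d x := by
      calc G a ≤ G x := G.mono hxmem.1.le
        _ = x * d x := by rw [hG x hxI.1, hDW]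
        _ ≤ 2*a * d x := mul_le_mul_of_nonneg_right hxmem.2.le hd0
    have hdiv : G a / (2*a) ≤ d x := by
      rw [div_le_iff₀ (by linarith)]
      linarith [hGa]
    calc ENNReal.ofReal (G a / (2*a)) ≤ ENNReal.ofReal (d x) :=
          ENNReal.ofReal_le_ofReal hdiv
      _ ≤ H.measure.rnDeriv volume x := ENNReal.ofReal_toReal_le
  -- integrate over Ioo a (2a)
  have hlow : ENNReal.ofReal (G a / (2*a)) * ENNReal.ofReal a
      ≤ ∫⁻ x in Ioo a (2*a), H.measure.rnDeriv volume x ∂volume := by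
    have hvol : volume (Ioo a (2*a)) = ENNReal.ofReal a := by
      rw [Real.volume_Ioo]; congr 1; ring
    calc ENNReal.ofReal (G a / (2*a)) * ENNReal.ofReal a
        = ∫⁻ _x in Ioo a (2*a), ENNReal.ofReal (G a / (2*a)) ∂volume := by
          rw [setLIntegral_const, hvol]
      _ ≤ ∫⁻ x in Ioo a (2*a), H.measure.rnDeriv volume x ∂volume :=
          lintegral_mono_ae ((ae_restrict_iff' measurableSet_Ioo).mpr hkey)
  have hup : ∫⁻ x in Ioo a (2*a), H.measure.rnDeriv volume x ∂volume
      ≤ ENNReal.ofReal (2 * 3^(q+1) * a^(q+1) + 2 * a^(q+1)) := by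
    calc ∫⁻ x in Ioo a (2*a), H.measure.rnDeriv volume x ∂volume
        ≤ H.measure (Ioo a (2*a)) := Measure.setLIntegral_rnDeriv_le _
      _ ≤ H.measure (Ioc a (2*a)) := measure_mono Ioo_subset_Ioc_self
      _ = ENNReal.ofReal (H (2*a) - H a) := H.measure_Ioc _ _
      _ ≤ ENNReal.ofReal (2 * 3^(q+1) * a^(q+1) + 2 * a^(q+1)) := by
          apply ENNReal.ofReal_le_ofReal
          have h1 : H (2*a) ≤ ψ (3*a) := by
            rw [hHdef, hψ.stieltjesFunction_eq]
            exact hψ.rightLim_le (by linarith)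
          have h2 : ψ a ≤ H a := by
            rw [hHdef, hψ.stieltjesFunction_eq]
            exact hψ.le_rightLim (le_refl a)
          have h3 : ψ (3*a) ≤ 2 * 3^(q+1) * a^(q+1) := by
            have hm : min (max (3*a) 0) (1/2) = 3*a := by
              rw [max_eq_left (by linarith), min_eq_left (by linarith)]
            rw [hψdef, clampK, hm]
            have := abs_maxKernel_le q (by linarith : (0:ℝ) ≤ 3*a) (by linarith)
            have h4 := (abs_le.mp this).2
            calc maxKernel q (3*a) ≤ 2 * (3*a)^(q+1) := h4
              _ = 2 * 3^(q+1) * a^(q+1) := by rw [mul_pow]; ring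
          have h5 : -(2 * a^(q+1)) ≤ ψ a := by
            have hm : min (max a 0) (1/2) = a := by
              rw [max_eq_left ha0.le, min_eq_left (by linarith)]
            rw [hψdef, clampK, hm]
            have := abs_maxKernel_le q ha0.le (by linarith)
            linarith [(abs_le.mp this).1]
          linarith
  have hcomb := hlow.trans hup
  have hGa0 : (0:ℝ) ≤ G a / (2*a) := div_nonneg (G_nonneg hG a ha0) (by linarith)
  rw [← ENNReal.ofReal_mul hGa0] at hcomb
  have hreal : G a / (2*a) * a ≤ 2 * 3^(q+1) * a^(q+1) + 2 * a^(q+1) := by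
    have h0 : (0:ℝ) ≤ G a / (2*a) * a := by
      apply mul_nonneg _ ha0.le
      apply div_nonneg (G_nonneg hG a ha0) (by linarith)
    have hapos : (0:ℝ) < a^(q+1) := pow_pos ha0 _
    exact (ENNReal.ofReal_le_ofReal_iff (by positivity)).mp hcomb
  have : G a / (2*a) * a = G a / 2 := by field_simp
  rw [this] at hreal
  linarith

lemma G_zero : G 0 = 0 := by
  have h1 : Tendsto G (nhdsWithin 0 (Ioi 0)) (nhds (G 0)) := by
    apply Tendsto.mono_left (G.right_continuous 0)
    exact nhdsWithin_mono 0 Ioi_subset_Ici_self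
  have h2 : Tendsto (fun t : ℝ => (4 * 3^(q+1) + 4) * t^(q+1))
      (nhdsWithin 0 (Ioi 0)) (nhds 0) := by
    have hc : Continuous (fun t : ℝ => (4 * 3^(q+1) + 4 : ℝ) * t^(q+1)) :=
      continuous_const.mul (continuous_pow _)
    have h := hc.tendsto 0
    rw [show (4 * 3^(q+1) + 4 : ℝ) * (0:ℝ)^(q+1) = 0 by simp] at h
    exact h.mono_left nhdsWithin_le_nhds
  have hub : G 0 ≤ 0 := by
    refine le_of_tendsto_of_tendsto h1 h2 ?_
    filter_upwards [Ioo_mem_nhdsGT_of_mem (by norm_num : (0:ℝ) ∈ Ico (0:ℝ) (1/8))]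
      with t ht
    exact G_bound hG t ⟨ht.1, ht.2.le⟩
  have hlb : 0 ≤ G 0 := by
    refine ge_of_tendsto h1 ?_
    filter_upwards [self_mem_nhdsWithin] with t ht
    exact G_nonneg hG t ht
  linarith

end DerivAux

section CountingAux

variable {μ : Measure ℂ} {ρ : ℝ}

lemma counting_fin (hft : HasFiniteType μ ρ) (t : ℝ) :
    μ (Metric.closedBall 0 t) ≠ ⊤ := by
  set L := Filter.limsup (fun t : ℝ =>
    μ (Metric.closedBall 0 t) / ENNReal.ofReal (t ^ ρ)) Filter.atTop with hL
  have hlt : L < L + 1 := ENNReal.lt_add_right hft.ne one_ne_zero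
  have hev := Filter.eventually_lt_of_limsup_lt hlt
  obtain ⟨T, hT1, hT2⟩ := (hev.and (eventually_ge_atTop (max t 1))).exists
  intro htop
  have hTt : t ≤ T := le_trans (le_max_left _ _) hT2
  have hTtop : μ (Metric.closedBall 0 T) = ⊤ :=
    top_le_iff.mp (htop ▸ measure_mono (Metric.closedBall_subset_closedBall hTt))
  have hT1' : (1:ℝ) ≤ T := le_trans (le_max_right _ _) hT2
  have hpow : (0:ℝ) < T ^ ρ := Real.rpow_pos_of_pos (by linarith) ρ
  rw [hTtop, ENNReal.top_div_of_ne_top ENNReal.ofReal_ne_top] at hT1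
  exact absurd (hT1.trans (lt_top_iff_ne_top.mpr (ENNReal.add_ne_top.mpr
    ⟨hft.ne, ENNReal.one_ne_top⟩))) (lt_irrefl ⊤)

lemma counting_mono (hft : HasFiniteType μ ρ) : Monotone (countingFun μ) := by
  intro a b hab
  exact ENNReal.toReal_mono (counting_fin hft b)
    (measure_mono (Metric.closedBall_subset_closedBall hab))

lemma counting_nonneg : ∀ t, 0 ≤ countingFun μ t := fun _ => ENNReal.toReal_nonneg

lemma counting_zero {ε : ℝ} (hε : 0 < ε) (hμε : μ (Metric.ball (0 : ℂ) ε) = 0) :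
    ∀ s < ε, countingFun μ s = 0 := by
  intro s hs
  rw [countingFun, le_antisymm ((measure_mono (Metric.closedBall_subset_ball hs)).trans
    hμε.le) (by positivity)]
  rfl

lemma counting_integrableOn (hft : HasFiniteType μ ρ) {ε : ℝ} (hε : 0 < ε)
    (hμε : μ (Metric.ball (0 : ℂ) ε) = 0) (b : ℝ) :
    IntegrableOn (fun s => countingFun μ s / s) (Ioc (0:ℝ) b) volume := by
  rcases le_or_gt b 0 with h | h
  · rw [Ioc_eq_empty (by exact fun hc => absurd (hc.trans_le h) (lt_irrefl 0))]
    exact integrableOn_empty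
  · have hmeas : AEStronglyMeasurable (fun s => countingFun μ s / s)
        (volume.restrict (Ioc (0:ℝ) b)) :=
      (((counting_mono hft).measurable).div measurable_id).aestronglyMeasurable
    refine Integrable.mono' (g := fun _ => countingFun μ b / ε) ?_ hmeas ?_
    · exact integrableOn_const measure_Ioc_lt_top.ne
    · rw [ae_restrict_iff' measurableSet_Ioc]
      refine ae_of_all _ fun s hs => ?_
      have hs0 : 0 < s := hs.1
      have hnn : 0 ≤ countingFun μ s / s := div_nonneg (counting_nonneg s) hs0.le
      rw [Real.norm_eq_abs, abs_of_nonneg hnn]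
      rcases lt_or_ge s ε with hsε | hsε
      · rw [counting_zero hε hμε s hsε, zero_div]
        exact div_nonneg (counting_nonneg b) hε.le
      · exact div_le_div₀ (counting_nonneg b) (counting_mono hft hs.2) hε hsε

lemma avg_eq_zero {ε : ℝ} (hε : 0 < ε) (hμε : μ (Metric.ball (0 : ℂ) ε) = 0) :
    ∀ x ≤ (0:ℝ), avgCountingFun μ x = 0 := by
  intro x hx
  rw [avgCountingFun]
  have : EqOn (fun s => countingFun μ s / s) (fun _ => (0:ℝ)) (uIcc (0:ℝ) x) := by
    intro s hs
    have hsx : s ≤ 0 := by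
      rcases mem_uIcc.mp hs with h | h
      · exact h.2.trans hx
      · exact h.2
    simp only
    rw [counting_zero hε hμε s (hsx.trans_lt hε), zero_div]
  rw [intervalIntegral.integral_congr this, intervalIntegral.integral_const, smul_eq_mul,
    mul_zero]

lemma avg_nonneg (hft : HasFiniteType μ ρ) {ε : ℝ} (hε : 0 < ε)
    (hμε : μ (Metric.ball (0 : ℂ) ε) = 0) (x : ℝ) : 0 ≤ avgCountingFun μ x := by
  rcases le_or_gt x 0 with h | h
  · rw [avg_eq_zero hε hμε x h]
  · rw [avgCountingFun, intervalIntegral.integral_of_le h.le]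
    apply setIntegral_nonneg measurableSet_Ioc
    intro s hs
    exact div_nonneg (counting_nonneg s) hs.1.le

lemma avg_ofReal (hft : HasFiniteType μ ρ) {ε : ℝ} (hε : 0 < ε)
    (hμε : μ (Metric.ball (0 : ℂ) ε) = 0) {x : ℝ} (hx : 0 < x) :
    ENNReal.ofReal (avgCountingFun μ x)
      = ∫⁻ s in Ioc (0:ℝ) x, ENNReal.ofReal (countingFun μ s / s) ∂volume := by
  rw [avgCountingFun, intervalIntegral.integral_of_le hx.le]
  rw [ofReal_integral_eq_lintegral_ofReal (counting_integrableOn hft hε hμε x)]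
  rw [EventuallyLE, ae_restrict_iff' measurableSet_Ioc]
  exact ae_of_all _ fun s hs => by
    simpa using div_nonneg (counting_nonneg (μ := μ) s) hs.1.le

lemma avg_monotone (hft : HasFiniteType μ ρ) {ε : ℝ} (hε : 0 < ε)
    (hμε : μ (Metric.ball (0 : ℂ) ε) = 0) : Monotone (avgCountingFun μ) := by
  intro x y hxy
  rcases le_or_gt y 0 with hy | hy
  · rw [avg_eq_zero hε hμε x (hxy.trans hy), avg_eq_zero hε hμε y hy]
  rcases le_or_gt x 0 with hx | hx
  · rw [avg_eq_zero hε hμε x hx]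
    exact avg_nonneg hft hε hμε y
  · rw [avgCountingFun, avgCountingFun]
    have h1 : IntervalIntegrable (fun s => countingFun μ s / s) volume 0 x := by
      rw [intervalIntegrable_iff_integrableOn_Ioc_of_le hx.le]
      exact counting_integrableOn hft hε hμε x
    have h2 : IntervalIntegrable (fun s => countingFun μ s / s) volume x y := by
      rw [intervalIntegrable_iff_integrableOn_Ioc_of_le hxy]
      exact (counting_integrableOn hft hε hμε y).mono_set (Ioc_subset_Ioc hx.le (le_refl y))
    rw [← intervalIntegral.integral_add_adjacent_intervals h1 h2]
    have h3 : 0 ≤ ∫ s in x..y, countingFun μ s / s := by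
      rw [intervalIntegral.integral_of_le hxy]
      apply setIntegral_nonneg measurableSet_Ioc
      intro s hs
      exact div_nonneg (counting_nonneg s) ((hx.trans hs.1).le)
    linarith

end CountingAux

/-- For `ρ > 0`, `q = ⌊ρ⌋`, and a positive Borel measure `μ` on `ℂ`
whose support avoids `0` and whose counting function has finite type at order `ρ`,
for every `r ≥ 0` one has
`∫_0^∞ (r/t) 𝓜_q'(r/t) dN_μ(t) = ∫_0^∞ N_μ(r/t) d(t 𝓜_q'(t))`.
The left-hand side is the Lebesgue–Stieltjes integral with respect to `N_μ`
(whose Stieltjes measure has density `μ^rad(t)/t` on `(0,∞)`); the right-hand side is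
the Lebesgue–Stieltjes integral with respect to the increasing function `t ↦ t 𝓜_q'(t)`,
formalized via any Stieltjes function `G` that agrees with it on `(0,∞)`. -/
theorem valiron_stmt4 (ρ : ℝ) (hρ : 0 < ρ) (q : ℕ) (hq : q = ⌊ρ⌋₊)
    (μ : Measure ℂ) (hsupp : SuppAvoidsZero μ) (hft : HasFiniteType μ ρ)
    (G : StieltjesFunction ℝ) (hG : ∀ t > (0:ℝ), G t = t * maxKernelDeriv q t)
    (r : ℝ) (hr : 0 ≤ r) :
    ∫ t in Set.Ioi (0:ℝ),
        (r / t) * maxKernelDeriv q (r / t) * (countingFun μ t / t) =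
      ∫ t in Set.Ioi (0:ℝ), avgCountingFun μ (r / t) ∂G.measure := by
  obtain ⟨ε, hε, hμε⟩ := hsupp
  rcases eq_or_lt_of_le hr with hr0 | hrpos
  · -- r = 0 : both sides vanish
    rw [← hr0]
    have h1 : ∀ t : ℝ, (0:ℝ) / t * maxKernelDeriv q (0 / t) * (countingFun μ t / t) = 0 := by
      intro t; rw [zero_div, zero_mul, zero_mul]
    have h2 : ∀ t : ℝ, avgCountingFun μ ((0:ℝ) / t) = 0 := by
      intro t
      rw [zero_div, avgCountingFun, intervalIntegral.integral_same]
    simp only [h1, h2, integral_zero]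
  -- main case r > 0
  have hG0 : G 0 = 0 := G_zero hG
  have hFnn : ∀ x : ℝ, 0 < x → 0 ≤ x * maxKernelDeriv q x := by
    intro x hx
    rw [← hG x hx]
    exact G_nonneg hG x hx
  have hnmeas : Measurable (countingFun μ) := (counting_mono hft).measurable
  have hDmeas : Measurable (fun t : ℝ => r / t * maxKernelDeriv q (r / t)) := by
    have h1 : Measurable (fun x : ℝ => x * maxKernelDeriv q x) :=
      measurable_id.mul (measurable_derivWithin_Ici (maxKernel q))
    exact h1.comp (measurable_const.div measurable_id)
  -- LHS as a lintegral
  have hLHS : ∫ t in Ioi (0:ℝ),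
      r / t * maxKernelDeriv q (r / t) * (countingFun μ t / t)
      = (∫⁻ t in Ioi (0:ℝ), ENNReal.ofReal
          (r / t * maxKernelDeriv q (r / t) * (countingFun μ t / t)) ∂volume).toReal := by
    apply integral_eq_lintegral_of_nonneg_ae
    · rw [EventuallyLE, ae_restrict_iff' measurableSet_Ioi]
      refine ae_of_all _ fun t ht => ?_
      have ht0 : (0:ℝ) < t := ht
      simp only [Pi.zero_apply]
      apply mul_nonneg (hFnn _ (div_pos hrpos ht0))
      exact div_nonneg (counting_nonneg t) ht0.le
    · exact (hDmeas.mul (hnmeas.div measurable_id)).aestronglyMeasurable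
  -- RHS as a lintegral
  have hRHS : ∫ t in Ioi (0:ℝ), avgCountingFun μ (r / t) ∂G.measure
      = (∫⁻ t in Ioi (0:ℝ), ENNReal.ofReal (avgCountingFun μ (r / t)) ∂G.measure).toReal := by
    apply integral_eq_lintegral_of_nonneg_ae
    · exact ae_of_all _ fun t => avg_nonneg hft hε hμε (r / t)
    · have : Measurable (avgCountingFun μ) := (avg_monotone hft hε hμε).measurable
      exact (this.comp (measurable_const.div measurable_id)).aestronglyMeasurable
  rw [hLHS, hRHS]
  congr 1
  -- the two lintegrals agree by Tonelli
  set h : ℝ → ℝ → ℝ≥0∞ := fun t s =>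
    if t * s ≤ r then ENNReal.ofReal (countingFun μ s / s) else 0 with hhdef
  have hhmeas : Measurable (Function.uncurry h) := by
    apply Measurable.ite
    · exact measurableSet_le (measurable_fst.mul measurable_snd) measurable_const
    · exact ENNReal.measurable_ofReal.comp ((hnmeas.div measurable_id).comp measurable_snd)
    · exact measurable_const
  -- step A : inner integral in s
  have hstepA : ∀ t ∈ Ioi (0:ℝ),
      ∫⁻ s in Ioi (0:ℝ), h t s ∂volume = ENNReal.ofReal (avgCountingFun μ (r / t)) := by
    intro t ht
    have ht0 : (0:ℝ) < t := ht
    have hA1 : ∫⁻ s in Ioi (0:ℝ), h t s ∂volume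
        = ∫⁻ s in Ioi (0:ℝ), (Ioc (0:ℝ) (r / t)).indicator
            (fun s => ENNReal.ofReal (countingFun μ s / s)) s ∂volume := by
      apply setLIntegral_congr_fun measurableSet_Ioi
      refine fun s hs => ?_
      have hs0 : (0:ℝ) < s := hs
      rw [hhdef]
      simp only [Set.indicator_apply, mem_Ioc]
      by_cases hc : t * s ≤ r
      · rw [if_pos hc, if_pos ⟨hs0, by rwa [le_div_iff₀ ht0, mul_comm]⟩]
      · rw [if_neg hc, if_neg (by
          rintro ⟨-, hle⟩
          exact hc (by rwa [le_div_iff₀ ht0, mul_comm] at hle))]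
    rw [hA1, lintegral_indicator measurableSet_Ioc, Measure.restrict_restrict measurableSet_Ioc,
      inter_eq_left.mpr (fun x hx => hx.1), ← avg_ofReal hft hε hμε (div_pos hrpos ht0)]
  -- step C : inner integral in t
  have hstepC : ∀ s ∈ Ioi (0:ℝ),
      ∫⁻ t in Ioi (0:ℝ), h t s ∂G.measure
        = ENNReal.ofReal (r / s * maxKernelDeriv q (r / s) * (countingFun μ s / s)) := by
    intro s hs
    have hs0 : (0:ℝ) < s := hs
    have hC1 : ∫⁻ t in Ioi (0:ℝ), h t s ∂G.measure
        = ∫⁻ t in Ioi (0:ℝ), (Ioc (0:ℝ) (r / s)).indicator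
            (fun _ => ENNReal.ofReal (countingFun μ s / s)) t ∂G.measure := by
      apply setLIntegral_congr_fun measurableSet_Ioi
      refine fun t ht => ?_
      have ht0 : (0:ℝ) < t := ht
      rw [hhdef]
      simp only [Set.indicator_apply, mem_Ioc]
      by_cases hc : t * s ≤ r
      · rw [if_pos hc, if_pos ⟨ht0, by rwa [le_div_iff₀ hs0]⟩]
      · rw [if_neg hc, if_neg (by
          rintro ⟨-, hle⟩
          exact hc (by rwa [le_div_iff₀ hs0] at hle))]
    rw [hC1, lintegral_indicator measurableSet_Ioc, Measure.restrict_restrict measurableSet_Ioc,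
      inter_eq_left.mpr (fun x hx => hx.1), setLIntegral_const, G.measure_Ioc, hG0, sub_zero,
      hG (r / s) (div_pos hrpos hs0)]
    rw [← ENNReal.ofReal_mul (div_nonneg (counting_nonneg s) hs0.le),
      mul_comm (countingFun μ s / s)]
  calc (∫⁻ t in Ioi (0:ℝ), ENNReal.ofReal
        (r / t * maxKernelDeriv q (r / t) * (countingFun μ t / t)) ∂volume)
      = ∫⁻ s in Ioi (0:ℝ), ∫⁻ t in Ioi (0:ℝ), h t s ∂G.measure ∂volume :=
        (setLIntegral_congr_fun measurableSet_Ioi hstepC).symm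
    _ = ∫⁻ t in Ioi (0:ℝ), ∫⁻ s in Ioi (0:ℝ), h t s ∂volume ∂G.measure :=
        (lintegral_lintegral_swap hhmeas.aemeasurable).symm
    _ = ∫⁻ t in Ioi (0:ℝ), ENNReal.ofReal (avgCountingFun μ (r / t)) ∂G.measure :=
        setLIntegral_congr_fun measurableSet_Ioi hstepA
end
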